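/- The planar relativistic collision map R̂ admits the Lax representation with Lax matrix L(x, α, ζ) = [[ζ + i(x₂ − α), x₀ + x₁], [x₀ − x₁, ζ − i(x₂ + α)]]: for all real α, β with q = α − β and all x, y ∈ ℝ³ with ⟨x+y, x+y⟩ + q² ≠ 0, setting (u, v) = R̂_{α,β}(x, y), one has for every ζ ∈ ℂ the 2×2 complex matrix identity L(u, α, ζ) · L(v, β, ζ) = L(y, β, ζ) · L(x, α, ζ). -/
import Mathlib


open Matrix Complex

/-- The three-dimensional Minkowski bilinear form on `ℝ³`. -/
def mink3 (a b : ℝ × ℝ × ℝ) : ℝ :=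
  a.1 * b.1 - a.2.1 * b.2.1 - a.2.2 * b.2.2

/-- The coefficient `k̂(x,y,q)` of the planar relativistic collision map. -/
noncomputable def khat (x y : ℝ × ℝ × ℝ) (q : ℝ) : ℝ :=
  (mink3 x x - mink3 y y + q ^ 2) / (mink3 (x + y) (x + y) + q ^ 2)

/-- The vector `r̂(x,y,q)` of the planar relativistic collision map. -/
noncomputable def rhat (x y : ℝ × ℝ × ℝ) (q : ℝ) : ℝ × ℝ × ℝ :=
  (mink3 (x + y) (x + y) + q ^ 2)⁻¹ •
    ((x.2.1 * y.2.2 - x.2.2 * y.2.1,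
      x.1 * y.2.2 - x.2.2 * y.1,
      x.2.1 * y.1 - x.1 * y.2.1) : ℝ × ℝ × ℝ)

/-- The planar relativistic collision map `R̂_{α,β}`. -/
noncomputable def Rhat (α β : ℝ) (x y : ℝ × ℝ × ℝ) :
    (ℝ × ℝ × ℝ) × (ℝ × ℝ × ℝ) :=
  (khat x y (α - β) • x + (1 - khat y x (α - β)) • y +
      (2 * (α - β)) • rhat x y (α - β),
   (1 - khat x y (α - β)) • x + khat y x (α - β) • y -
      (2 * (α - β)) • rhat x y (α - β))

/-- The Lax matrix
`L(x, α, ζ) = [[ζ + i(x₂ − α), x₀ + x₁], [x₀ − x₁, ζ − i(x₂ + α)]]`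
of the planar relativistic collision map. -/
noncomputable def Lax2D (x : ℝ × ℝ × ℝ) (α : ℝ) (ζ : ℂ) :
    Matrix (Fin 2) (Fin 2) ℂ :=
  !![ζ + Complex.I * ((x.2.2 - α : ℝ) : ℂ), ((x.1 + x.2.1 : ℝ) : ℂ);
     ((x.1 - x.2.1 : ℝ) : ℂ), ζ - Complex.I * ((x.2.2 + α : ℝ) : ℂ)]

set_option maxHeartbeats 1600000 in
/-- The planar relativistic collision map admits the Lax representation with
Lax matrix `L(x, α, ζ)`. -/
theorem planar_collision_lax
    (α β : ℝ) (x y : ℝ × ℝ × ℝ)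
    (h : mink3 (x + y) (x + y) + (α - β) ^ 2 ≠ 0)
    (u v : ℝ × ℝ × ℝ) (huv : (u, v) = Rhat α β x y)
    (ζ : ℂ) :
    Lax2D u α ζ * Lax2D v β ζ = Lax2D y β ζ * Lax2D x α ζ := by
  obtain ⟨x0, x1, x2⟩ := x
  obtain ⟨y0, y1, y2⟩ := y
  obtain ⟨u0, u1, u2⟩ := u
  obtain ⟨v0, v1, v2⟩ := v
  simp only [Rhat, khat, rhat, mink3, Prod.mk_add_mk, Prod.smul_mk, smul_eq_mul,
    Prod.mk_sub_mk, Prod.mk.injEq] at huv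
  simp only [mink3, Prod.mk_add_mk] at h
  rw [show (y0 + x0) * (y0 + x0) - (y1 + x1) * (y1 + x1) - (y2 + x2) * (y2 + x2)
      + (α - β) ^ 2 = (x0 + y0) * (x0 + y0) - (x1 + y1) * (x1 + y1)
      - (x2 + y2) * (x2 + y2) + (α - β) ^ 2 from by ring] at huv
  set d : ℝ := (x0 + y0) * (x0 + y0) - (x1 + y1) * (x1 + y1) - (x2 + y2) * (x2 + y2)
      + (α - β) ^ 2 with hd
  obtain ⟨⟨hu0, hu1, hu2⟩, hv0, hv1, hv2⟩ := huv
  have hc0 : u0 + v0 = x0 + y0 := by rw [hu0, hv0]; field_simp; ring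
  have hc1 : u1 + v1 = x1 + y1 := by rw [hu1, hv1]; field_simp; ring
  have hc2 : u2 + v2 = x2 + y2 := by rw [hu2, hv2]; field_simp; ring
  have hq1 : (u2 - α) * (v2 - β) - (u0 + u1) * (v0 - v1)
      = (y2 - β) * (x2 - α) - (y0 + y1) * (x0 - x1) := by
    rw [hu0, hu1, hu2, hv0, hv1, hv2]; field_simp; rw [hd]; ring
  have hq2 : (u2 - α) * (v0 + v1) - (u0 + u1) * (v2 + β)
      = (y2 - β) * (x0 + x1) - (y0 + y1) * (x2 + α) := by
    rw [hu0, hu1, hu2, hv0, hv1, hv2]; field_simp; rw [hd]; ring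
  have hq3 : (u0 - u1) * (v2 - β) - (u2 + α) * (v0 - v1)
      = (y0 - y1) * (x2 - α) - (y2 + β) * (x0 - x1) := by
    rw [hu0, hu1, hu2, hv0, hv1, hv2]; field_simp; rw [hd]; ring
  have hq4 : (u0 - u1) * (v0 + v1) - (u2 + α) * (v2 + β)
      = (y0 - y1) * (x0 + x1) - (y2 + β) * (x2 + α) := by
    rw [hu0, hu1, hu2, hv0, hv1, hv2]; field_simp; rw [hd]; ring
  have C0 : (u0 : ℂ) + v0 = x0 + y0 := by exact_mod_cast hc0
  have C1 : (u1 : ℂ) + v1 = x1 + y1 := by exact_mod_cast hc1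
  have C2 : (u2 : ℂ) + v2 = x2 + y2 := by exact_mod_cast hc2
  have Q1 : ((u2 : ℂ) - α) * ((v2 : ℂ) - β) - ((u0 : ℂ) + u1) * ((v0 : ℂ) - v1)
      = ((y2 : ℂ) - β) * ((x2 : ℂ) - α) - ((y0 : ℂ) + y1) * ((x0 : ℂ) - x1) := by
    exact_mod_cast hq1
  have Q2 : ((u2 : ℂ) - α) * ((v0 : ℂ) + v1) - ((u0 : ℂ) + u1) * ((v2 : ℂ) + β)
      = ((y2 : ℂ) - β) * ((x0 : ℂ) + x1) - ((y0 : ℂ) + y1) * ((x2 : ℂ) + α) := by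
    exact_mod_cast hq2
  have Q3 : ((u0 : ℂ) - u1) * ((v2 : ℂ) - β) - ((u2 : ℂ) + α) * ((v0 : ℂ) - v1)
      = ((y0 : ℂ) - y1) * ((x2 : ℂ) - α) - ((y2 : ℂ) + β) * ((x0 : ℂ) - x1) := by
    exact_mod_cast hq3
  have Q4 : ((u0 : ℂ) - u1) * ((v0 : ℂ) + v1) - ((u2 : ℂ) + α) * ((v2 : ℂ) + β)
      = ((y0 : ℂ) - y1) * ((x0 : ℂ) + x1) - ((y2 : ℂ) + β) * ((x2 : ℂ) + α) := by
    exact_mod_cast hq4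
  clear hu0 hu1 hu2 hv0 hv1 hv2 hc0 hc1 hc2 hq1 hq2 hq3 hq4 h hd
  ext i j
  fin_cases i <;> fin_cases j <;>
    simp only [Lax2D, Matrix.mul_apply, Fin.sum_univ_two, Matrix.cons_val', Matrix.cons_val_zero,
      Matrix.cons_val_one, Matrix.head_cons, Matrix.head_fin_const, Matrix.empty_val',
      Matrix.cons_val_fin_one, Matrix.of_apply, Fin.mk_zero, Fin.mk_one, Fin.isValue] <;>
    push_cast
  · linear_combination Complex.I * ζ * C2 + Complex.I ^ 2 * Q1 +
      (((u0 : ℂ) + u1) * ((v0 : ℂ) - v1) - ((y0 : ℂ) + y1) * ((x0 : ℂ) - x1)) * Complex.I_sq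
  · linear_combination ζ * C0 + ζ * C1 + Complex.I * Q2
  · linear_combination ζ * C0 - ζ * C1 + Complex.I * Q3
  · linear_combination -(Complex.I * ζ) * C2 + Q4 +
      (((u2 : ℂ) + α) * ((v2 : ℂ) + β) - ((y2 : ℂ) + β) * ((x2 : ℂ) + α)) * Complex.I_sq
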